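/- arXiv:1611.03991 — 4 statements merged into one kernel-verified Lean document; each statement's English description precedes it below -/
import Mathlib

section
/- If a tournament T has two distinct minimal τ-retentive sets R1 and R2, then R1 and R2 are disjoint. -/
variable {V : Type}

/-- Inneighbors of `v` inside the subtournament on `s` (excluding `v` itself). -/
def inn [DecidableEq V] (r : V → V → Prop) [DecidableRel r] (s : Finset V) (v : V) :
    Finset V :=
  (s.filter fun u => r u v).erase v

lemma inn_card_lt [DecidableEq V] (r : V → V → Prop) [DecidableRel r]
    (s : Finset V) (v : V) (hv : v ∈ s) : (inn r s v).card < s.card := by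
  have h1 : inn r s v ⊆ s.erase v := by
    intro x hx
    rcases Finset.mem_erase.mp hx with ⟨hxv, hx2⟩
    exact Finset.mem_erase.mpr ⟨hxv, (Finset.mem_filter.mp hx2).1⟩
  calc (inn r s v).card ≤ (s.erase v).card := Finset.card_le_card h1
    _ < s.card := Finset.card_erase_lt_of_mem hv

/-- The tournament equilibrium set of the subtournament of `r` on `s`:
the union of all minimal τ-retentive sets. -/
def tau [DecidableEq V] (r : V → V → Prop) [DecidableRel r] (s : Finset V) : Set V :=
  {x | ∃ A : Finset V, x ∈ A ∧ A ⊆ s ∧ A.Nonempty ∧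
    (∀ v, v ∈ s → v ∈ A → ((inn r s v).Nonempty → tau r (inn r s v) ⊆ ↑A)) ∧
    ∀ B : Finset V, B ⊆ s → B ⊂ A →
      ¬ (B.Nonempty ∧
        ∀ v, v ∈ s → v ∈ B → ((inn r s v).Nonempty → tau r (inn r s v) ⊆ ↑B))}
termination_by s.card
decreasing_by
  all_goals exact inn_card_lt r s v (by assumption)

/-- `A` is a τ-retentive set of the tournament on `s`. -/
def Retentive [DecidableEq V] (r : V → V → Prop) [DecidableRel r] (s A : Finset V) : Prop :=
  A ⊆ s ∧ A.Nonempty ∧ ∀ v ∈ A, (inn r s v).Nonempty → tau r (inn r s v) ⊆ ↑A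

/-- `A` is a minimal τ-retentive set of the tournament on `s`. -/
def MinRetentive [DecidableEq V] (r : V → V → Prop) [DecidableRel r] (s A : Finset V) : Prop :=
  Retentive r s A ∧ ∀ B, Retentive r s B → B ⊆ A → B = A

/-- `r` is a tournament on the vertex set `s`. -/
def IsTournament (r : V → V → Prop) (s : Finset V) : Prop :=
  (∀ v ∈ s, ¬ r v v) ∧ ∀ u ∈ s, ∀ v ∈ s, u ≠ v → (r u v ↔ ¬ r v u)

/-- `u` is the captain of `v` in the subtournament on `s`:
`u` dominates `v` and all other inneighbors of `v`. -/
def IsCaptain (r : V → V → Prop) (s : Finset V) (u v : V) : Prop :=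
  u ∈ s ∧ v ∈ s ∧ r u v ∧ ∀ w ∈ s, w ≠ u → r w v → r u w

/-- The (undirected) domination graph of the subtournament on `s`. -/
def domGraph (r : V → V → Prop) (s : Finset V) : SimpleGraph V where
  Adj u v := (IsCaptain r s u v ∨ IsCaptain r s v u) ∧ u ≠ v
  symm := by
    constructor
    intro u v h
    exact ⟨h.1.symm, h.2.symm⟩
  loopless := by
    constructor
    intro u h
    exact h.2 rfl

theorem stmt2 [DecidableEq V] (r : V → V → Prop) [DecidableRel r] (s : Finset V)
    (hT : IsTournament r s) (R1 R2 : Finset V)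
    (h1 : MinRetentive r s R1) (h2 : MinRetentive r s R2) (hne : R1 ≠ R2) :
    Disjoint R1 R2 := by
  by_contra hd
  rw [Finset.not_disjoint_iff] at hd
  obtain ⟨x, hx1, hx2⟩ := hd
  have hret : Retentive r s (R1 ∩ R2) := by
    refine ⟨(Finset.inter_subset_left).trans h1.1.1, ⟨x, Finset.mem_inter.mpr ⟨hx1, hx2⟩⟩, ?_⟩
    intro v hv hne'
    rw [Finset.mem_inter] at hv
    have t1 := h1.1.2.2 v hv.1 hne'
    have t2 := h2.1.2.2 v hv.2 hne'
    intro y hy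
    simp only [Finset.coe_inter, Set.mem_inter_iff]
    exact ⟨t1 hy, t2 hy⟩
  have e1 := h1.2 _ hret Finset.inter_subset_left
  have e2 := h2.2 _ hret Finset.inter_subset_right
  exact hne (e1.symm.trans e2)
end

section
/- If u is the captain of v in a tournament T and v belongs to a minimal τ-retentive set R of T, then u also belongs to R. -/
variable {V : Type}

theorem stmt4 [DecidableEq V] (r : V → V → Prop) [DecidableRel r] (s : Finset V)
    (hT : IsTournament r s) (u v : V) (hc : IsCaptain r s u v)
    (R : Finset V) (hR : MinRetentive r s R) (hvR : v ∈ R) :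
    u ∈ R := by
  obtain ⟨hus, hvs, huv, hdom⟩ := hc
  have hne : u ≠ v := by
    rintro rfl
    exact hT.1 u hus huv
  have huD : u ∈ inn r s v :=
    Finset.mem_erase.mpr ⟨hne, Finset.mem_filter.mpr ⟨hus, huv⟩⟩
  have hDu : inn r (inn r s v) u = ∅ := by
    apply Finset.eq_empty_of_forall_notMem
    intro x hx
    obtain ⟨hxu, hx2⟩ := Finset.mem_erase.mp hx
    obtain ⟨hxD, hxu2⟩ := Finset.mem_filter.mp hx2
    obtain ⟨hxv, hx3⟩ := Finset.mem_erase.mp hxD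
    obtain ⟨hxs, hxrv⟩ := Finset.mem_filter.mp hx3
    have hux : r u x := hdom x hxs hxu hxrv
    exact ((hT.2 x hxs u hus hxu).mp hxu2) hux
  have hutau : u ∈ tau r (inn r s v) := by
    rw [tau]
    refine ⟨{u}, Finset.mem_singleton_self u, Finset.singleton_subset_iff.mpr huD,
      Finset.singleton_nonempty u, ?_, ?_⟩
    · intro w hwD hwA hne'
      rw [Finset.mem_singleton] at hwA
      subst hwA
      rw [hDu] at hne'
      exact absurd hne' Finset.not_nonempty_empty
    · intro B hB hBA ⟨hBne, _⟩
      rw [Finset.eq_empty_of_ssubset_singleton hBA] at hBne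
      exact Finset.not_nonempty_empty hBne
  exact hR.1.2.2 v hvR ⟨u, huD⟩ hutau
end

section
/- Let R be a minimal τ-retentive set of a tournament T and v, u ∈ R. Then v is the captain of u in the induced subtournament T[R] if and only if v is the captain of u in T. -/
variable {V : Type}

lemma inn_subset' [DecidableEq V] (r : V → V → Prop) [DecidableRel r] (t : Finset V) (v : V) :
    inn r t v ⊆ t :=
  (Finset.erase_subset _ _).trans (Finset.filter_subset _ _)

lemma mem_tau [DecidableEq V] {r : V → V → Prop} [DecidableRel r] {t : Finset V} {x : V} :
    x ∈ tau r t ↔ ∃ A : Finset V, x ∈ A ∧ A ⊆ t ∧ A.Nonempty ∧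
      (∀ v, v ∈ t → v ∈ A → ((inn r t v).Nonempty → tau r (inn r t v) ⊆ ↑A)) ∧
      ∀ B : Finset V, B ⊆ t → B ⊂ A →
        ¬ (B.Nonempty ∧
          ∀ v, v ∈ t → v ∈ B → ((inn r t v).Nonempty → tau r (inn r t v) ⊆ ↑B)) := by
  conv_lhs => rw [tau]
  rfl

lemma tau_subset' [DecidableEq V] (r : V → V → Prop) [DecidableRel r] (t : Finset V) :
    tau r t ⊆ ↑t := by
  intro x hx
  rcases mem_tau.mp hx with ⟨A, hxA, hAt, -⟩
  exact hAt hxA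

lemma exists_minP [DecidableEq V] (r : V → V → Prop) [DecidableRel r] (t : Finset V) :
    ∀ n (A : Finset V), A.card ≤ n → A ⊆ t → A.Nonempty →
      (∀ v, v ∈ t → v ∈ A → ((inn r t v).Nonempty → tau r (inn r t v) ⊆ ↑A)) →
      ∃ M : Finset V, M ⊆ t ∧ M.Nonempty ∧
        (∀ v, v ∈ t → v ∈ M → ((inn r t v).Nonempty → tau r (inn r t v) ⊆ ↑M)) ∧
        ∀ B : Finset V, B ⊆ t → B ⊂ M →
          ¬ (B.Nonempty ∧
            ∀ v, v ∈ t → v ∈ B → ((inn r t v).Nonempty → tau r (inn r t v) ⊆ ↑B)) := by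
  intro n
  induction n with
  | zero =>
    intro A hc hAt hA _
    exact absurd (Finset.card_pos.mpr hA) (by omega)
  | succ n ih =>
    intro A hc hAt hA hcond
    by_cases h : ∃ B : Finset V, B ⊆ t ∧ B ⊂ A ∧ B.Nonempty ∧
        ∀ v, v ∈ t → v ∈ B → ((inn r t v).Nonempty → tau r (inn r t v) ⊆ ↑B)
    · rcases h with ⟨B, hBt, hBA, hBne, hBcond⟩
      have := Finset.card_lt_card hBA
      exact ih B (by omega) hBt hBne hBcond
    · exact ⟨A, hAt, hA, hcond, fun B hBt hBA hb => h ⟨B, hBt, hBA, hb.1, hb.2⟩⟩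

lemma tau_nonempty' [DecidableEq V] (r : V → V → Prop) [DecidableRel r] (t : Finset V)
    (ht : t.Nonempty) : (tau r t).Nonempty := by
  obtain ⟨M, hMt, hMne, hMcond, hMmin⟩ :=
    exists_minP r t t.card t le_rfl (le_refl t) ht
      (fun v hv _ _ => (tau_subset' r _).trans (Finset.coe_subset.mpr (inn_subset' r t v)))
  obtain ⟨x, hx⟩ := hMne
  exact ⟨x, mem_tau.mpr ⟨M, hx, hMt, ⟨x, hx⟩, hMcond, hMmin⟩⟩

/-- Key lemma: if `v ∈ t` dominates all of `tau r t` (except itself), then `v` has no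
inneighbors in `t` at all, i.e. `v` is a Condorcet winner of the subtournament on `t`. -/
lemma cw_lemma [DecidableEq V] (r : V → V → Prop) [DecidableRel r] {s : Finset V}
    (hT : IsTournament r s) :
    ∀ n (t : Finset V), t.card ≤ n → t ⊆ s → ∀ v ∈ t,
      (∀ x ∈ tau r t, x ≠ v → r v x) → inn r t v = ∅ := by
  intro n
  induction n with
  | zero =>
    intro t hc hts v hv _
    have : t = ∅ := Finset.card_eq_zero.mp (le_antisymm hc (Nat.zero_le _))
    simp [this] at hv
  | succ n ih =>
    intro t hc hts v hv hdom
    obtain ⟨x₀, hx₀⟩ := tau_nonempty' r t ⟨v, hv⟩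
    rcases mem_tau.mp hx₀ with ⟨A, hx₀A, hAt, hAne, hAcond, hAmin⟩
    have hA_tau : ∀ x ∈ A, x ∈ tau r t :=
      fun x hx => mem_tau.mpr ⟨A, hx, hAt, hAne, hAcond, hAmin⟩
    by_cases hvA : v ∈ A
    · by_contra hne
      have hinn : (inn r t v).Nonempty := Finset.nonempty_iff_ne_empty.mpr hne
      have hsub : tau r (inn r t v) ⊆ ↑A := hAcond v hv hvA hinn
      obtain ⟨y, hy⟩ := tau_nonempty' r (inn r t v) hinn
      have hy_inn : y ∈ inn r t v := tau_subset' r _ hy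
      rcases Finset.mem_erase.mp hy_inn with ⟨hyv, hy2⟩
      rcases Finset.mem_filter.mp hy2 with ⟨hyt, hryv⟩
      have hrvy : r v y := hdom y (hA_tau y (hsub hy)) hyv
      exact ((hT.2 v (hts hv) y (hts hyt) (Ne.symm hyv)).mp hrvy) hryv
    · exfalso
      have ha_t : x₀ ∈ t := hAt hx₀A
      have hane : x₀ ≠ v := fun h => hvA (h ▸ hx₀A)
      have hva : r v x₀ := hdom x₀ (hA_tau x₀ hx₀A) hane
      have hv_t' : v ∈ inn r t x₀ :=
        Finset.mem_erase.mpr ⟨Ne.symm hane, Finset.mem_filter.mpr ⟨hv, hva⟩⟩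
      have hinn_ne : (inn r t x₀).Nonempty := ⟨v, hv_t'⟩
      have hcard : (inn r t x₀).card < t.card := inn_card_lt r t x₀ ha_t
      have ht's : inn r t x₀ ⊆ s := (inn_subset' r t x₀).trans hts
      have hAsub : tau r (inn r t x₀) ⊆ ↑A := hAcond x₀ ha_t hx₀A hinn_ne
      have hdom' : ∀ x ∈ tau r (inn r t x₀), x ≠ v → r v x :=
        fun x hx hxv => hdom x (hA_tau x (hAsub hx)) hxv
      have h0 : inn r (inn r t x₀) v = ∅ := ih (inn r t x₀) (by omega) ht's v hv_t' hdom'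
      have hvtau : v ∈ tau r (inn r t x₀) := by
        refine mem_tau.mpr ⟨{v}, Finset.mem_singleton_self v,
          Finset.singleton_subset_iff.mpr hv_t', ⟨v, Finset.mem_singleton_self v⟩, ?_, ?_⟩
        · intro z hz hzv hne
          rw [Finset.mem_singleton.mp hzv] at hne ⊢
          rw [h0] at hne
          exact absurd hne (by simp [Finset.not_nonempty_empty])
        · intro B _ hBv hb
          have : B = ∅ := Finset.eq_empty_of_ssubset_singleton hBv
          rw [this] at hb
          exact absurd hb.1 (by simp)
      exact hvA (hAsub hvtau)

theorem stmt5 [DecidableEq V] (r : V → V → Prop) [DecidableRel r] (s : Finset V)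
    (hT : IsTournament r s) (R : Finset V) (hR : MinRetentive r s R)
    (v u : V) (hv : v ∈ R) (hu : u ∈ R) :
    IsCaptain r R v u ↔ IsCaptain r s v u := by
  have hRs : R ⊆ s := hR.1.1
  constructor
  · rintro ⟨hvR, huR, hvu, hcap⟩
    refine ⟨hRs hvR, hRs huR, hvu, ?_⟩
    intro w hws hwv hwu
    have hIrr := hT.1
    have hvne_u : v ≠ u := fun h => hIrr u (hRs huR) (h ▸ hvu)
    have hv_in : v ∈ inn r s u :=
      Finset.mem_erase.mpr ⟨hvne_u, Finset.mem_filter.mpr ⟨hRs hvR, hvu⟩⟩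
    have htauR : tau r (inn r s u) ⊆ ↑R := hR.1.2.2 u huR ⟨v, hv_in⟩
    have hdom : ∀ x ∈ tau r (inn r s u), x ≠ v → r v x := by
      intro x hx hxv
      have hxR : x ∈ R := htauR hx
      have hx_in : x ∈ inn r s u := tau_subset' r _ hx
      have hrxu : r x u := (Finset.mem_filter.mp (Finset.mem_of_mem_erase hx_in)).2
      exact hcap x hxR hxv hrxu
    have hcw : inn r (inn r s u) v = ∅ :=
      cw_lemma r hT (inn r s u).card (inn r s u) le_rfl (inn_subset' r s u) v hv_in hdom
    by_contra hnvw
    have hwu_ne : w ≠ u := fun h => hIrr u (hRs huR) (h ▸ hwu)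
    have hw_in : w ∈ inn r s u :=
      Finset.mem_erase.mpr ⟨hwu_ne, Finset.mem_filter.mpr ⟨hws, hwu⟩⟩
    have hrwv : r w v := (hT.2 w hws v (hRs hv) hwv).mpr hnvw
    have : w ∈ inn r (inn r s u) v :=
      Finset.mem_erase.mpr ⟨hwv, Finset.mem_filter.mpr ⟨hw_in, hrwv⟩⟩
    rw [hcw] at this
    simp at this
  · rintro ⟨hvs, hus, hvu, hcap⟩
    exact ⟨hv, hu, hvu, fun w hwR hwv hwu => hcap w (hRs hwR) hwv hwu⟩
end

section
/- Every locally transitive tournament has a unique minimal τ-retentive set (Schwartz's Conjecture holds for locally transitive tournaments). -/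
variable {V : Type}

set_option linter.unusedSectionVars false
set_option linter.unusedVariables false
section Helpers
variable [DecidableEq V] (r : V → V → Prop) [DecidableRel r]

lemma mem_inn {s : Finset V} {v x : V} : x ∈ inn r s v ↔ x ≠ v ∧ x ∈ s ∧ r x v := by
  simp [inn, Finset.mem_erase, Finset.mem_filter, and_assoc]

lemma exists_max : ∀ (t : Finset V), t.Nonempty →
    (∀ a ∈ t, ∀ b ∈ t, a ≠ b → r a b ∨ r b a) →
    (∀ a ∈ t, ∀ b ∈ t, ∀ c ∈ t, r a b → r b c → r a c) →
    ∃ u ∈ t, ∀ w ∈ t, w ≠ u → r u w := by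
  intro t
  induction t using Finset.induction_on with
  | empty => rintro ⟨x, hx⟩; simp at hx
  | insert _ _ ha ih =>
    rename_i a t
    intro _ htot htr
    rcases t.eq_empty_or_nonempty with rfl | htne
    · exact ⟨a, Finset.mem_insert_self a _, by
        intro w hw hwa
        rcases Finset.mem_insert.mp hw with rfl | h
        · exact absurd rfl hwa
        · simp at h⟩
    · obtain ⟨u, hu, humax⟩ := ih htne
        (fun x hx y hy => htot x (Finset.mem_insert_of_mem hx) y (Finset.mem_insert_of_mem hy))
        (fun x hx y hy z hz => htr x (Finset.mem_insert_of_mem hx) y (Finset.mem_insert_of_mem hy)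
          z (Finset.mem_insert_of_mem hz))
      have hau : a ≠ u := fun h => ha (h ▸ hu)
      rcases htot a (Finset.mem_insert_self a _) u (Finset.mem_insert_of_mem hu) hau with hr | hr
      · refine ⟨a, Finset.mem_insert_self a _, ?_⟩
        intro w hw hwa
        rcases Finset.mem_insert.mp hw with rfl | hwt
        · exact absurd rfl hwa
        · rcases eq_or_ne w u with rfl | hwu
          · exact hr
          · exact htr a (Finset.mem_insert_self a _) u (Finset.mem_insert_of_mem hu)
              w (Finset.mem_insert_of_mem hwt) hr (humax w hwt hwu)
      · refine ⟨u, Finset.mem_insert_of_mem hu, ?_⟩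
        intro w hw hwu
        rcases Finset.mem_insert.mp hw with rfl | hwt
        · exact hr
        · exact humax w hwt hwu

lemma tau_linear : ∀ (n : ℕ) (t : Finset V), t.card ≤ n → ∀ u : V,
    (∀ a ∈ t, ∀ b ∈ t, a ≠ b → (r a b ↔ ¬ r b a)) →
    (∀ a ∈ t, ∀ b ∈ t, ∀ c ∈ t, r a b → r b c → r a c) →
    u ∈ t → (∀ w ∈ t, w ≠ u → r u w) → tau r t = {u} := by
  intro n
  induction n with
  | zero =>
    intro t hcard u _ _ hu _
    exact absurd (Finset.card_pos.mpr ⟨u, hu⟩) (by omega)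
  | succ m ih =>
    intro t hcard u htot htr hu hmax
    -- `inn r t u` is empty
    have hinnu : ¬ (inn r t u).Nonempty := by
      rintro ⟨x, hx⟩
      rcases (mem_inn r).mp hx with ⟨hxu, hxt, hxr⟩
      exact ((htot x hxt u hu hxu).mp hxr) (hmax x hxt hxu)
    -- the closedness property for {u}
    have hclosed : ∀ v, v ∈ t → v ∈ ({u} : Finset V) →
        ((inn r t v).Nonempty → tau r (inn r t v) ⊆ ↑({u} : Finset V)) := by
      intro v _ hv hn
      rcases Finset.mem_singleton.mp hv with rfl
      exact absurd hn hinnu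
    have humem : u ∈ tau r t := by
      rw [tau]
      refine ⟨{u}, Finset.mem_singleton_self u, Finset.singleton_subset_iff.mpr hu,
        ⟨u, Finset.mem_singleton_self u⟩, hclosed, ?_⟩
      intro B _ hB
      rcases Finset.eq_empty_of_ssubset_singleton hB with rfl
      rintro ⟨⟨x, hx⟩, -⟩
      simp at hx
    ext x
    simp only [Set.mem_singleton_iff]
    constructor
    · intro hx
      rw [tau] at hx
      obtain ⟨A, hxA, hAt, hAne, hAcl, hAmin⟩ := hx
      -- u ∈ A
      have huA : u ∈ A := by
        rcases eq_or_ne x u with rfl | hxu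
        · exact hxA
        · have hxt : x ∈ t := hAt hxA
          have hux : u ∈ inn r t x := (mem_inn r).mpr ⟨fun h => hxu h.symm, hu, hmax x hxt hxu⟩
          have hnn : (inn r t x).Nonempty := ⟨u, hux⟩
          have hsub := hAcl x hxt hxA hnn
          have hcard' : (inn r t x).card ≤ m := by
            have := inn_card_lt r t x hxt
            omega
          have heq : tau r (inn r t x) = {u} := by
            refine ih (inn r t x) hcard' u ?_ ?_ hux ?_
            · intro a ha b hb hab
              exact htot a ((mem_inn r).mp ha).2.1 b ((mem_inn r).mp hb).2.1 hab
            · intro a ha b hb c hc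
              exact htr a ((mem_inn r).mp ha).2.1 b ((mem_inn r).mp hb).2.1
                c ((mem_inn r).mp hc).2.1
            · intro w hw hwu
              exact hmax w ((mem_inn r).mp hw).2.1 hwu
          have : u ∈ tau r (inn r t x) := heq ▸ rfl
          exact hsub this
      -- A = {u}
      have hAu : A = {u} := by
        by_contra hne
        have hss : ({u} : Finset V) ⊂ A :=
          (Finset.ssubset_iff_subset_ne.mpr ⟨Finset.singleton_subset_iff.mpr huA,
            fun h => hne h.symm⟩)
        exact hAmin {u} (Finset.singleton_subset_iff.mpr hu) hss
          ⟨⟨u, Finset.mem_singleton_self u⟩, hclosed⟩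
      exact Finset.mem_singleton.mp (hAu ▸ hxA)
    · rintro rfl
      exact humem

end Helpers
section Orbit
variable [DecidableEq V] (r : V → V → Prop) [DecidableRel r]

lemma iter_mem {s : Finset V} {g : V → V} (hgs : ∀ y ∈ s, g y ∈ s) :
    ∀ y ∈ s, ∀ n, g^[n] y ∈ s := by
  intro y hy n
  induction n with
  | zero => exact hy
  | succ n ihn => rw [Function.iterate_succ_apply']; exact hgs _ ihn

lemma iter_fix_mul {g : V → V} {v : V} {p : ℕ} (hper : g^[p] v = v) (k : ℕ) :
    g^[p * k] v = v := by
  rw [Function.iterate_mul]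
  exact Function.iterate_fixed hper k

lemma iter_mod {g : V → V} {v : V} {p : ℕ} (hp : 0 < p) (hper : g^[p] v = v) (i : ℕ) :
    g^[i] v = g^[i % p] v := by
  conv_lhs => rw [show i = i % p + p * (i / p) from (Nat.mod_add_div i p).symm]
  rw [Function.iterate_add_apply, iter_fix_mul hper]

lemma periodic_ne {g : V → V} {v : V} {p : ℕ} (hper : g^[p] v = v)
    (hmin : ∀ t, 0 < t → t < p → g^[t] v ≠ v) :
    ∀ i t, 0 < t → t < p → g^[i + t] v ≠ g^[i] v := by
  intro i t h1 h2 heq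
  have hstep : ∀ m, g^[m + (i + t)] v = g^[m + i] v := by
    intro m
    rw [Function.iterate_add_apply, Function.iterate_add_apply g m i, heq]
  have hp : 0 < p := by
    rcases Nat.eq_zero_or_pos p with rfl | h
    · omega
    · exact h
  have hm := hstep (p * (i + 1) - i)
  have e1 : p * (i + 1) - i + (i + t) = p * (i + 1) + t := by
    have : i ≤ p * (i + 1) := by nlinarith
    omega
  have e2 : p * (i + 1) - i + i = p * (i + 1) := by
    have : i ≤ p * (i + 1) := by nlinarith
    omega
  rw [e1, e2] at hm
  rw [iter_fix_mul hper (i+1)] at hm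
  rw [show p * (i + 1) + t = t + p * (i+1) by omega, Function.iterate_add_apply,
    iter_fix_mul hper (i+1)] at hm
  exact hmin t h1 h2 hm

lemma odd_period {s : Finset V} {p : ℕ} (hp : 2 ≤ p)
    (hasym : ∀ a ∈ s, ∀ b ∈ s, r a b → ¬ r b a)
    (htotal : ∀ a ∈ s, ∀ b ∈ s, a ≠ b → ¬ r a b → r b a)
    (VV : ℕ → V) (hVs : ∀ i, VV i ∈ s)
    (hVper : ∀ i, VV (i + p) = VV i)
    (hVne : ∀ i t, 0 < t → t < p → VV (i + t) ≠ VV i)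
    (hVcap : ∀ i, r (VV (i+1)) (VV i) ∧
      ∀ x ∈ s, x ≠ VV (i+1) → r x (VV i) → r (VV (i+1)) x) :
    Odd p := by
  rcases Nat.even_or_odd p with hev | hodd
  · exfalso
    have claim : ∀ t, 1 ≤ t → t < p → ∀ i,
        (Odd t → r (VV (i+t)) (VV i)) ∧ (¬ Odd t → r (VV i) (VV (i+t))) := by
      intro t
      induction t with
      | zero => intro h; omega
      | succ t iht =>
        intro _ hlt i
        rcases Nat.eq_zero_or_pos t with rfl | htpos
        · exact ⟨fun _ => (hVcap i).1, fun h => absurd odd_one h⟩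
        have iht' := iht htpos (by omega)
        constructor
        · intro hst
          have hte : ¬ Odd t := by
            rcases Nat.even_or_odd t with h | h
            · simpa [Nat.not_odd_iff_even]
            · exact absurd hst (by simp [Nat.odd_add_one, Nat.not_odd_iff_even,
                Nat.even_add_one, Nat.not_even_iff_odd, h])
          have h1 : r (VV i) (VV (i + t)) := (iht' i).2 hte
          have h2 := (hVcap (i + t)).2 (VV i) (hVs i)
            (Ne.symm (hVne i (t+1) (by omega) hlt)) h1
          exact h2
        · intro hst
          have hto : Odd t := by
            rcases Nat.even_or_odd t with h | h
            · exact absurd (Even.add_one h) hst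
            · exact h
          by_contra hnr
          have hr : r (VV (i + (t+1))) (VV i) :=
            htotal (VV i) (hVs i) (VV (i + (t+1))) (hVs _)
              (Ne.symm (hVne i (t+1) (by omega) hlt)) hnr
          have h2 : r (VV (i+1)) (VV (i + (t+1))) := by
            have hne2 : VV (i + (t+1)) ≠ VV (i+1) := by
              have := hVne (i+1) t htpos (by omega)
              rwa [show i + 1 + t = i + (t+1) by omega] at this
            exact (hVcap i).2 (VV (i + (t+1))) (hVs _) hne2 hr
          have h3 : r (VV (i + (t+1))) (VV (i+1)) := by
            have := (iht' (i+1)).1 hto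
            rwa [show i + 1 + t = i + (t+1) by omega] at this
          exact hasym _ (hVs _) _ (hVs _) h2 h3
    obtain ⟨k, hk⟩ := hev
    have hodd1 : Odd (p - 1) := ⟨k - 1, by omega⟩
    have h1 : r (VV (0 + (p-1))) (VV 0) := (claim (p-1) (by omega) (by omega) 0).1 hodd1
    have h2 : r (VV (p - 1 + 1)) (VV (p-1)) := (hVcap (p-1)).1
    rw [show p - 1 + 1 = 0 + p by omega, hVper 0] at h2
    rw [show 0 + (p - 1) = p - 1 by omega] at h1
    exact hasym _ (hVs _) _ (hVs _) h1 h2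
  · exact hodd

lemma cross_false {s : Finset V} {p : ℕ} (hp : 1 ≤ p) (hpodd : Odd p)
    (hasym : ∀ a ∈ s, ∀ b ∈ s, r a b → ¬ r b a)
    (htotal : ∀ a ∈ s, ∀ b ∈ s, a ≠ b → ¬ r a b → r b a)
    (VV WW : ℕ → V) (hVs : ∀ i, VV i ∈ s) (hWs : ∀ j, WW j ∈ s)
    (hVp : VV p = VV 0)
    (hVcap : ∀ i, r (VV (i+1)) (VV i) ∧
      ∀ x ∈ s, x ≠ VV (i+1) → r x (VV i) → r (VV (i+1)) x)
    (hWcap : ∀ j, r (WW (j+1)) (WW j) ∧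
      ∀ x ∈ s, x ≠ WW (j+1) → r x (WW j) → r (WW (j+1)) x)
    (hdisj : ∀ i j, VV i ≠ WW j) : False := by
  set F : ℕ → Prop := fun x => r (WW x) (VV 0) with hF
  have hi : ∀ x, ¬ F x → F (x+1) := by
    intro x hx
    have h1 : r (VV 0) (WW x) := htotal (WW x) (hWs x) (VV 0) (hVs 0) (hdisj 0 x).symm hx
    exact (hWcap x).2 (VV 0) (hVs 0) (hdisj 0 (x+1)) h1
  have hchain : ∀ x k, r (VV 1) (WW x) → r (VV (1+k)) (WW (x+k)) := by
    intro x k h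
    induction k with
    | zero => exact h
    | succ k ihk =>
      have h2 : r (WW (x+k+1)) (VV (1+k)) :=
        (hWcap (x+k)).2 (VV (1+k)) (hVs _) (hdisj (1+k) (x+k+1)) ihk
      have h3 : r (VV (1+k+1)) (WW (x+k+1)) :=
        (hVcap (1+k)).2 (WW (x+k+1)) (hWs _) (hdisj (1+k+1) (x+k+1)).symm h2
      rwa [show 1 + (k+1) = 1 + k + 1 by omega, show x + (k+1) = x + k + 1 by omega]
  have hii : ∀ x, F x → ¬ F (x + (p-1)) := by
    intro x hx
    have h1 : r (VV 1) (WW x) := (hVcap 0).2 (WW x) (hWs x) (hdisj 1 x).symm hx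
    have h2 := hchain x (p-1) h1
    rw [show 1 + (p-1) = p by omega, hVp] at h2
    exact hasym _ (hVs 0) _ (hWs _) h2
  have halt : ∀ x, F (x+1) ↔ ¬ F x := by
    intro x
    refine ⟨fun h1 h0 => ?_, hi x⟩
    have a := hii x h0
    have b := hii (x+1) h1
    have c := hi _ a
    rw [show x + (p-1) + 1 = x + 1 + (p-1) by omega] at c
    exact b c
  have h2step : ∀ x, F (x+2) ↔ F x := by
    intro x
    rw [show x + 2 = (x+1)+1 by omega, halt (x+1), halt x, not_not]
  have hflip : ∀ n x, F (x + 2*n) ↔ F x := by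
    intro n
    induction n with
    | zero => intro x; simp
    | succ n ihn =>
      intro x
      rw [show x + 2*(n+1) = (x + 2) + 2*n by omega, ihn (x+2), h2step x]
  obtain ⟨m, hm⟩ := hpodd
  have hxp : ∀ x, F (x + p) ↔ ¬ F x := by
    intro x
    rw [hm, show x + (2*m+1) = (x+1) + 2*m by omega, hflip m (x+1), halt x]
  have hFprop : ∀ x, F x → F (x + p) := by
    intro x hx
    have a := hii x hx
    have c := hi _ a
    rwa [show x + (p-1) + 1 = x + p by omega] at c
  have hnoF : ∀ x, ¬ F x := fun x hx => (hxp x).mp (hFprop x hx) hx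
  exact hnoF 1 (hi 0 (hnoF 0))

end Orbit
section MainAux
variable [DecidableEq V] (r : V → V → Prop) [DecidableRel r]

lemma ret_gclosed {s B : Finset V} {g : V → V}
    (hgfix : ∀ y, ¬ (y ∈ s ∧ (inn r s y).Nonempty) → g y = y)
    (hgtau : ∀ y ∈ s, (inn r s y).Nonempty → tau r (inn r s y) = {g y})
    (hB : Retentive r s B) : ∀ y ∈ B, ∀ n, g^[n] y ∈ B := by
  obtain ⟨hBs, hBne, hBcl⟩ := hB
  have hstep : ∀ y ∈ B, g y ∈ B := by
    intro y hy
    by_cases hn : (inn r s y).Nonempty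
    · have h := hBcl y hy hn
      rw [hgtau y (hBs hy) hn] at h
      exact h rfl
    · rw [hgfix y (by tauto)]; exact hy
  intro y hy n
  induction n with
  | zero => exact hy
  | succ n ihn => rw [Function.iterate_succ_apply']; exact hstep _ ihn

lemma orbit_minret {s : Finset V} {g : V → V}
    (hgs : ∀ y ∈ s, g y ∈ s)
    (hgfix : ∀ y, ¬ (y ∈ s ∧ (inn r s y).Nonempty) → g y = y)
    (hgtau : ∀ y ∈ s, (inn r s y).Nonempty → tau r (inn r s y) = {g y})
    {v : V} {p : ℕ} (hv : v ∈ s) (hp : 0 < p) (hper : g^[p] v = v) :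
    MinRetentive r s ((Finset.range p).image (fun i => g^[i] v)) := by
  set R := (Finset.range p).image (fun i => g^[i] v) with hR
  have hmem : ∀ i, g^[i] v ∈ R := by
    intro i
    exact Finset.mem_image.mpr ⟨i % p, Finset.mem_range.mpr (Nat.mod_lt i hp),
      (iter_mod hp hper i).symm⟩
  have hRs : R ⊆ s := by
    intro y hy
    obtain ⟨k, -, rfl⟩ := Finset.mem_image.mp hy
    exact iter_mem hgs v hv k
  have hret : Retentive r s R := by
    refine ⟨hRs, ⟨v, by simpa using hmem 0⟩, ?_⟩
    intro y hy hn
    obtain ⟨k, -, rfl⟩ := Finset.mem_image.mp hy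
    rw [hgtau _ (hRs hy) hn, Set.singleton_subset_iff]
    have : g (g^[k] v) = g^[k+1] v := (Function.iterate_succ_apply' g k v).symm
    rw [this]
    exact Finset.mem_coe.mpr (hmem (k+1))
  refine ⟨hret, ?_⟩
  intro B hB hBR
  obtain ⟨b, hb⟩ := hB.2.1
  obtain ⟨i, -, hbi⟩ := Finset.mem_image.mp (hBR hb)
  have hile : i + 1 ≤ p * (i + 1) := Nat.le_mul_of_pos_left (i+1) hp
  have hvB : v ∈ B := by
    have h1 := ret_gclosed r hgfix hgtau hB b hb (p * (i+1) - i)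
    rw [← hbi, ← Function.iterate_add_apply,
      show p * (i+1) - i + i = p * (i+1) by omega, iter_fix_mul hper (i+1)] at h1
    exact h1
  have hsub : R ⊆ B := by
    intro y hy
    obtain ⟨k, -, rfl⟩ := Finset.mem_image.mp hy
    exact ret_gclosed r hgfix hgtau hB v hvB k
  exact Finset.Subset.antisymm hBR hsub

end MainAux

theorem stmt15 [DecidableEq V] (r : V → V → Prop) [DecidableRel r] (s : Finset V)
    (hT : IsTournament r s) (hne : s.Nonempty)
    (hin : ∀ v ∈ s, ∀ a ∈ s, ∀ b ∈ s, ∀ c ∈ s,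
      r a v → r b v → r c v → r a b → r b c → r a c)
    (hout : ∀ v ∈ s, ∀ a ∈ s, ∀ b ∈ s, ∀ c ∈ s,
      r v a → r v b → r v c → r a b → r b c → r a c) :
    ∃! R, MinRetentive r s R := by
  classical
  obtain ⟨hirr, hiff⟩ := hT
  have hasym : ∀ a ∈ s, ∀ b ∈ s, r a b → ¬ r b a := by
    intro a ha b hb hab hba
    rcases eq_or_ne a b with rfl | hne'
    · exact hirr a ha hab
    · exact ((hiff a ha b hb hne').mp hab) hba
  have htotal : ∀ a ∈ s, ∀ b ∈ s, a ≠ b → ¬ r a b → r b a := by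
    intro a ha b hb hne' hnab
    exact (hiff b hb a ha hne'.symm).mpr hnab
  have hmaxex : ∀ y ∈ s, (inn r s y).Nonempty →
      ∃ u ∈ inn r s y, ∀ w ∈ inn r s y, w ≠ u → r u w := by
    intro y hy hn
    refine exists_max r _ hn ?_ ?_
    · intro a ha b hb hab
      by_cases h : r a b
      · exact Or.inl h
      · exact Or.inr (htotal a ((mem_inn r).mp ha).2.1 b ((mem_inn r).mp hb).2.1 hab h)
    · intro a ha b hb c hc hab hbc
      obtain ⟨-, has, hra⟩ := (mem_inn r).mp ha
      obtain ⟨-, hbs, hrb⟩ := (mem_inn r).mp hb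
      obtain ⟨-, hcs, hrc⟩ := (mem_inn r).mp hc
      exact hin y hy a has b hbs c hcs hra hrb hrc hab hbc
  let g : V → V := fun y =>
    if h : y ∈ s ∧ (inn r s y).Nonempty then (hmaxex y h.1 h.2).choose else y
  have hgdef : ∀ y ∈ s, (inn r s y).Nonempty →
      g y ∈ inn r s y ∧ ∀ w ∈ inn r s y, w ≠ g y → r (g y) w := by
    intro y hy hn
    have h : y ∈ s ∧ (inn r s y).Nonempty := ⟨hy, hn⟩
    simp only [g, dif_pos h]
    exact (hmaxex y h.1 h.2).choose_spec
  have hgfix : ∀ y, ¬ (y ∈ s ∧ (inn r s y).Nonempty) → g y = y := by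
    intro y h; simp only [g, dif_neg h]
  have hgs : ∀ y ∈ s, g y ∈ s := by
    intro y hy
    by_cases hn : (inn r s y).Nonempty
    · exact ((mem_inn r).mp (hgdef y hy hn).1).2.1
    · rw [hgfix y (by tauto)]; exact hy
  have hgcap : ∀ y ∈ s, (inn r s y).Nonempty →
      (g y ∈ s ∧ g y ≠ y ∧ r (g y) y ∧ ∀ x ∈ s, x ≠ g y → r x y → r (g y) x) := by
    intro y hy hn
    obtain ⟨h1, h2⟩ := hgdef y hy hn
    obtain ⟨hne', hmem', hr'⟩ := (mem_inn r).mp h1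
    refine ⟨hmem', hne', hr', ?_⟩
    intro x hx hxg hxy
    have hxy' : x ≠ y := by rintro rfl; exact hirr x hx hxy
    exact h2 x ((mem_inn r).mpr ⟨hxy', hx, hxy⟩) hxg
  have hgtau : ∀ y ∈ s, (inn r s y).Nonempty → tau r (inn r s y) = {g y} := by
    intro y hy hn
    obtain ⟨h1, h2⟩ := hgdef y hy hn
    refine tau_linear r (inn r s y).card _ le_rfl (g y) ?_ ?_ h1 h2
    · intro a ha b hb hab
      exact hiff a ((mem_inn r).mp ha).2.1 b ((mem_inn r).mp hb).2.1 hab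
    · intro a ha b hb c hc
      obtain ⟨-, has, hra⟩ := (mem_inn r).mp ha
      obtain ⟨-, hbs, hrb⟩ := (mem_inn r).mp hb
      obtain ⟨-, hcs, hrc⟩ := (mem_inn r).mp hc
      exact hin y hy a has b hbs c hcs hra hrb hrc
  -- existence of a periodic point in the forward orbit of any point
  have hfind : ∀ x ∈ s, ∃ v, v ∈ s ∧ (∃ n, 0 < n ∧ g^[n] v = v) ∧ ∃ m, g^[m] x = v := by
    intro x hx
    have hmap : ∀ i ∈ Finset.range (s.card + 1), g^[i] x ∈ s := fun i _ => iter_mem hgs x hx i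
    have hcard : s.card < (Finset.range (s.card+1)).card := by simp
    obtain ⟨a, _, b, _, hab, heq⟩ := Finset.exists_ne_map_eq_of_card_lt_of_maps_to hcard hmap
    rcases Nat.lt_or_ge a b with h | h
    · exact ⟨g^[a] x, iter_mem hgs x hx a,
        ⟨b - a, by omega, by
          rw [← Function.iterate_add_apply, show b - a + a = b by omega]; exact heq.symm⟩,
        ⟨a, rfl⟩⟩
    · have h' : b < a := lt_of_le_of_ne h (Ne.symm hab)
      exact ⟨g^[b] x, iter_mem hgs x hx b,
        ⟨a - b, by omega, by
          rw [← Function.iterate_add_apply, show a - b + b = a by omega]; exact heq⟩,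
        ⟨b, rfl⟩⟩
  obtain ⟨x0, hx0⟩ := hne
  obtain ⟨v, hv, hvex, -⟩ := hfind x0 hx0
  have hpspec := Nat.find_spec hvex
  set p := Nat.find hvex with hpdef
  have hpmin : ∀ t, 0 < t → t < p → g^[t] v ≠ v := fun t h1 h2 he =>
    Nat.find_min hvex h2 ⟨h1, he⟩
  set R : Finset V := (Finset.range p).image (fun i => g^[i] v) with hRdef
  have hRmin : MinRetentive r s R := orbit_minret r hgs hgfix hgtau hv hpspec.1 hpspec.2
  refine ⟨R, hRmin, ?_⟩
  intro R' hR'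
  obtain ⟨w0, hw0⟩ := hR'.1.2.1
  have hw0s : w0 ∈ s := hR'.1.1 hw0
  obtain ⟨w, hws, hwex, m, hm⟩ := hfind w0 hw0s
  have hwR' : w ∈ R' := by rw [← hm]; exact ret_gclosed r hgfix hgtau hR'.1 w0 hw0 m
  have hqspec := Nat.find_spec hwex
  set q := Nat.find hwex with hqdef
  have hqmin : ∀ t, 0 < t → t < q → g^[t] w ≠ w := fun t h1 h2 he =>
    Nat.find_min hwex h2 ⟨h1, he⟩
  by_cases hcap : ∃ i j, g^[i] v = g^[j] w
  · obtain ⟨i, j, hij⟩ := hcap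
    have hxR' : g^[i] v ∈ R' := hij ▸ ret_gclosed r hgfix hgtau hR'.1 w hwR' j
    have hile : i + 1 ≤ p * (i + 1) := Nat.le_mul_of_pos_left (i+1) hpspec.1
    have hvR' : v ∈ R' := by
      have h1 := ret_gclosed r hgfix hgtau hR'.1 _ hxR' (p * (i+1) - i)
      rwa [← Function.iterate_add_apply, show p*(i+1) - i + i = p*(i+1) by omega,
        iter_fix_mul hpspec.2 (i+1)] at h1
    have hRsub : R ⊆ R' := by
      intro y hy
      obtain ⟨k, -, rfl⟩ := Finset.mem_image.mp hy
      exact ret_gclosed r hgfix hgtau hR'.1 v hvR' k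
    exact (hR'.2 R hRmin.1 hRsub).symm
  · exfalso
    push_neg at hcap
    have hp2 : 2 ≤ p := by
      by_contra h
      have hp1 : p = 1 := by omega
      have hgv : g v = v := by
        have := hpspec.2; rw [hp1] at this; simpa using this
      have hinnv : ¬ (inn r s v).Nonempty := fun hn => (hgcap v hv hn).2.1 hgv
      have hwv : w ≠ v := fun h => hcap 0 0 (by simpa using h.symm)
      have hrvw : r v w := by
        apply htotal w hws v hv hwv
        intro hrw
        exact hinnv ⟨w, (mem_inn r).mpr ⟨hwv, hws, hrw⟩⟩
      have hn : (inn r s w).Nonempty := ⟨v, (mem_inn r).mpr ⟨hwv.symm, hv, hrvw⟩⟩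
      have hcapw := hgcap w hws hn
      have hgw : g w = v := by
        by_contra hne'
        have h1 : r (g w) v := hcapw.2.2.2 v hv (Ne.symm hne') hrvw
        exact hinnv ⟨g w, (mem_inn r).mpr ⟨hne', hcapw.1, h1⟩⟩
      exact hcap 0 1 (by simpa using hgw.symm)
    have hq2 : 2 ≤ q := by
      by_contra h
      have hq1 : q = 1 := by omega
      have hgw : g w = w := by
        have := hqspec.2; rw [hq1] at this; simpa using this
      have hinnw : ¬ (inn r s w).Nonempty := fun hn => (hgcap w hws hn).2.1 hgw
      have hwv : v ≠ w := fun h => hcap 0 0 (by simpa using h)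
      have hrwv : r w v := by
        apply htotal v hv w hws hwv
        intro hrw
        exact hinnw ⟨v, (mem_inn r).mpr ⟨hwv, hv, hrw⟩⟩
      have hn : (inn r s v).Nonempty := ⟨w, (mem_inn r).mpr ⟨hwv.symm, hws, hrwv⟩⟩
      have hcapv := hgcap v hv hn
      have hgv : g v = w := by
        by_contra hne'
        have h1 : r (g v) w := hcapv.2.2.2 w hws (Ne.symm hne') hrwv
        exact hinnw ⟨g v, (mem_inn r).mpr ⟨hne', hcapv.1, h1⟩⟩
      exact hcap 1 0 (by simpa using hgv)
    set VV : ℕ → V := fun i => g^[i] v with hVVdef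
    set WW : ℕ → V := fun j => g^[j] w with hWWdef
    have hVs : ∀ i, VV i ∈ s := fun i => iter_mem hgs v hv i
    have hWs : ∀ j, WW j ∈ s := fun j => iter_mem hgs w hws j
    have hVper : ∀ i, VV (i + p) = VV i := by
      intro i
      show g^[i+p] v = g^[i] v
      rw [Function.iterate_add_apply, hpspec.2]
    have hVne : ∀ i t, 0 < t → t < p → VV (i + t) ≠ VV i :=
      fun i t h1 h2 => periodic_ne hpspec.2 hpmin i t h1 h2
    have hWne : ∀ j t, 0 < t → t < q → WW (j + t) ≠ WW j :=
      fun j t h1 h2 => periodic_ne hqspec.2 hqmin j t h1 h2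
    have hVcap : ∀ i, r (VV (i+1)) (VV i) ∧
        ∀ x ∈ s, x ≠ VV (i+1) → r x (VV i) → r (VV (i+1)) x := by
      intro i
      have hVi : VV i ∈ s := hVs i
      have hgi : VV (i+1) = g (VV i) := by
        show g^[i+1] v = g (g^[i] v)
        rw [Function.iterate_succ_apply']
      have hnn : (inn r s (VV i)).Nonempty := by
        by_contra hn
        have h1 : g (VV i) = VV i := hgfix _ (by tauto)
        exact hVne i 1 one_pos (by omega) (hgi.trans h1)
      have hc := hgcap _ hVi hnn
      rw [hgi]
      exact ⟨hc.2.2.1, hc.2.2.2⟩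
    have hWcap : ∀ j, r (WW (j+1)) (WW j) ∧
        ∀ x ∈ s, x ≠ WW (j+1) → r x (WW j) → r (WW (j+1)) x := by
      intro j
      have hWj : WW j ∈ s := hWs j
      have hgj : WW (j+1) = g (WW j) := by
        show g^[j+1] w = g (g^[j] w)
        rw [Function.iterate_succ_apply']
      have hnn : (inn r s (WW j)).Nonempty := by
        by_contra hn
        have h1 : g (WW j) = WW j := hgfix _ (by tauto)
        exact hWne j 1 one_pos (by omega) (hgj.trans h1)
      have hc := hgcap _ hWj hnn
      rw [hgj]
      exact ⟨hc.2.2.1, hc.2.2.2⟩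
    have hpodd : Odd p := odd_period r hp2 hasym htotal VV hVs hVper hVne hVcap
    have hVp0 : VV p = VV 0 := by have := hVper 0; simpa using this
    exact cross_false r (by omega) hpodd hasym htotal VV WW hVs hWs hVp0 hVcap hWcap
      (fun i j => hcap i j)
end
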